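/- For every rational number h > 3 there exists a constant C_h such that for every integer n > C_h there exists an n×⌊hn⌋ complex matrix with (ℓ₁,t)-recoverability for every positive integer t ≤ √n/4. -/

import Mathlib

open scoped BigOperators

noncomputable def welch (n N : ℕ) : ℝ :=
  Real.sqrt (((N : ℝ) - n) / (((N : ℝ) - 1) * n))

/-- Normalised absolute inner product of columns `i` and `j` of `Φ`. -/
noncomputable def colCoh {m ι : Type*} [Fintype m] (Φ : Matrix m ι ℂ) (i j : ι) : ℝ :=
  ‖∑ r, (starRingEnd ℂ) (Φ r i) * Φ r j‖ /
    (Real.sqrt (∑ r, ‖Φ r i‖ ^ 2) * Real.sqrt (∑ r, ‖Φ r j‖ ^ 2))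

/-- `(ℓ₁,t)`-recoverability: every `t`-sparse `x` is the unique `ℓ₁`-minimizer among
solutions `z` of `Φ z = Φ x`. -/
def Recoverable {m ι : Type*} [Fintype m] [Fintype ι] [DecidableEq ι]
    (Φ : Matrix m ι ℂ) (t : ℕ) : Prop :=
  ∀ x : ι → ℂ, (Finset.univ.filter (fun i => x i ≠ 0)).card ≤ t →
    ∀ z : ι → ℂ, Φ.mulVec z = Φ.mulVec x → z ≠ x →
      ∑ i, ‖x i‖ < ∑ i, ‖z i‖

/-! ### Auxiliary lemmas about the standard additive character -/

lemma conj_mul_self_stdAddChar {p : ℕ} [NeZero p] (x : ZMod p) :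
    (starRingEnd ℂ) (ZMod.stdAddChar x) * ZMod.stdAddChar x = 1 := by
  rw [mul_comm, Complex.mul_conj]
  norm_cast
  rw [Complex.normSq_eq_norm_sq, ZMod.stdAddChar_apply, Circle.norm_coe]; norm_num

lemma conj_stdAddChar {p : ℕ} [NeZero p] (x : ZMod p) :
    (starRingEnd ℂ) (ZMod.stdAddChar x) = ZMod.stdAddChar (-x) := by
  have h1 : ZMod.stdAddChar (-x) * ZMod.stdAddChar x = 1 := by
    rw [← AddChar.map_add_eq_mul, neg_add_cancel, AddChar.map_zero_eq_one]
  have h3 : (ZMod.stdAddChar x : ℂ) ≠ 0 := by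
    intro h
    have := congrArg norm h
    rw [ZMod.stdAddChar_apply, Circle.norm_coe] at this
    simp at this
  exact (mul_right_cancel₀ h3 (h1.trans (conj_mul_self_stdAddChar x).symm)).symm

lemma sum_stdAddChar_mul_eq_zero {p : ℕ} [NeZero p] {c : ZMod p} (hc : c ≠ 0) :
    ∑ r : ZMod p, ZMod.stdAddChar (c * r) = 0 := by
  simpa using AddChar.sum_eq_zero_of_ne_one (ZMod.isPrimitive_stdAddChar p hc)

lemma norm_chirp_sum {p : ℕ} [Fact p.Prime] (hp2 : p ≠ 2) {c : ZMod p} (hc : c ≠ 0)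
    (d : ZMod p) :
    ‖∑ r : ZMod p, ZMod.stdAddChar (c * r ^ 2 + d * r)‖ = Real.sqrt p := by
  set S : ℂ := ∑ r : ZMod p, ZMod.stdAddChar (c * r ^ 2 + d * r) with hS
  have key : S * (starRingEnd ℂ) S = (p : ℂ) := by
    rw [hS, map_sum, Finset.sum_mul_sum]
    simp_rw [conj_stdAddChar, ← AddChar.map_add_eq_mul]
    calc ∑ r : ZMod p, ∑ s : ZMod p,
            ZMod.stdAddChar (c * r ^ 2 + d * r + -(c * s ^ 2 + d * s))
        = ∑ r : ZMod p, ∑ u : ZMod p,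
            ZMod.stdAddChar ((2 * c * u) * r + (d * u - c * u ^ 2)) := by
          refine Finset.sum_congr rfl fun r _ => ?_
          rw [← (Equiv.subLeft r).sum_comp
            (fun s => ZMod.stdAddChar (c * r ^ 2 + d * r + -(c * s ^ 2 + d * s)))]
          refine Finset.sum_congr rfl fun u _ => ?_
          simp only [Equiv.subLeft_apply]
          congr 1
          ring
      _ = ∑ u : ZMod p, (∑ r : ZMod p, ZMod.stdAddChar ((2 * c * u) * r))
            * ZMod.stdAddChar (d * u - c * u ^ 2) := by
          rw [Finset.sum_comm]
          refine Finset.sum_congr rfl fun u _ => ?_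
          rw [Finset.sum_mul]
          refine Finset.sum_congr rfl fun r _ => ?_
          rw [← AddChar.map_add_eq_mul]
      _ = (p : ℂ) := by
          rw [Finset.sum_eq_single 0]
          · simp [Finset.card_univ]
          · intro u _ hu
            have h2 : (2 : ZMod p) ≠ 0 := by
              intro h
              have hd : (p : ℕ) ∣ 2 :=
                (ZMod.natCast_eq_zero_iff 2 p).mp (by exact_mod_cast h)
              have hp := (Fact.out : p.Prime)
              exact hp2 ((Nat.prime_dvd_prime_iff_eq hp Nat.prime_two).mp hd)
            have : (2 * c * u : ZMod p) ≠ 0 := mul_ne_zero (mul_ne_zero h2 hc) hu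
            rw [sum_stdAddChar_mul_eq_zero this, zero_mul]
          · simp
  have h1 : ‖S‖ ^ 2 = (p : ℝ) := by
    have := congrArg norm key
    rw [norm_mul, RCLike.norm_conj, Complex.norm_natCast] at this
    rw [← this]; ring
  rw [← h1, Real.sqrt_sq (norm_nonneg S)]

lemma sum_fin_eq_sum_zmod {n p : ℕ} [NeZero p] (hpn : p ≤ n) (G : ZMod p → ℂ) :
    ∑ r : Fin n, (if (r : ℕ) < p then G ((r : ℕ) : ZMod p) else 0) = ∑ x : ZMod p, G x := by
  rw [Fin.sum_univ_eq_sum_range (fun k => if k < p then G ((k : ℕ) : ZMod p) else 0) n]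
  rw [← Finset.sum_subset (Finset.range_subset_range.2 hpn)
    (fun k _ hk => if_neg (by simpa using hk))]
  rw [Finset.sum_congr rfl (fun k hk => if_pos (Finset.mem_range.1 hk))]
  exact Finset.sum_nbij' (fun k => ((k : ℕ) : ZMod p)) (fun x => x.val)
    (fun k _ => Finset.mem_univ _) (fun x _ => Finset.mem_range.2 (ZMod.val_lt x))
    (fun k hk => ZMod.val_natCast_of_lt (Finset.mem_range.1 hk))
    (fun x _ => ZMod.natCast_zmod_val x)
    (fun k _ => rfl)

/-! ### Recoverability from Gram-matrix estimates -/

theorem recoverable_of_gram {m ι : Type*} [Fintype m] [Fintype ι] [DecidableEq ι]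
    (Φ : Matrix m ι ℂ) (p : ℝ) (hp : 0 < p)
    (hdiag : ∀ j, ∑ r, (starRingEnd ℂ) (Φ r j) * Φ r j = (p : ℂ))
    (hoff : ∀ i j, i ≠ j → ‖∑ r, (starRingEnd ℂ) (Φ r i) * Φ r j‖ ≤ Real.sqrt p)
    (t : ℕ) (ht : (2 * t : ℝ) < Real.sqrt p + 1) :
    Recoverable Φ t := by
  classical
  set s := Real.sqrt p with hs
  have hs0 : 0 < s := Real.sqrt_pos.2 hp
  have hsp : s * s = p := Real.mul_self_sqrt hp.le
  intro x hx z hz hne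
  set v : ι → ℂ := z - x with hv
  have hv0 : v ≠ 0 := sub_ne_zero.2 hne
  have hΦv : Φ.mulVec v = 0 := by rw [hv, Matrix.mulVec_sub, hz, sub_self]
  set L : ℝ := ∑ i, ‖v i‖ with hL
  have hL0 : 0 < L := by
    obtain ⟨i, hi⟩ := Function.ne_iff.1 hv0
    exact Finset.sum_pos' (fun j _ => norm_nonneg _)
      ⟨i, Finset.mem_univ i, norm_pos_iff.2 hi⟩
  have key : ∀ i, (s + 1) * ‖v i‖ ≤ L := by
    intro i
    have h0 : ∑ j, (∑ r, (starRingEnd ℂ) (Φ r i) * Φ r j) * v j = 0 := by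
      have : ∑ j, (∑ r, (starRingEnd ℂ) (Φ r i) * Φ r j) * v j
          = ∑ r, (starRingEnd ℂ) (Φ r i) * (Φ.mulVec v r) := by
        simp_rw [Matrix.mulVec, dotProduct, Finset.mul_sum, Finset.sum_mul]
        rw [Finset.sum_comm]
        exact Finset.sum_congr rfl fun r _ => Finset.sum_congr rfl fun j _ => by ring
      rw [this, hΦv]
      simp
    have h1 : (p : ℂ) * v i
        = -∑ j ∈ Finset.univ.erase i, (∑ r, (starRingEnd ℂ) (Φ r i) * Φ r j) * v j := by
      have h2 : (∑ r, (starRingEnd ℂ) (Φ r i) * Φ r i) * v i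
          + ∑ j ∈ Finset.univ.erase i, (∑ r, (starRingEnd ℂ) (Φ r i) * Φ r j) * v j = 0 := by
        rw [Finset.add_sum_erase Finset.univ
          (fun j => (∑ r, (starRingEnd ℂ) (Φ r i) * Φ r j) * v j) (Finset.mem_univ i)]
        exact h0
      rw [hdiag i] at h2
      linear_combination h2
    have h3 : p * ‖v i‖ ≤ s * (L - ‖v i‖) := by
      have hpn : ‖(p : ℂ) * v i‖ = p * ‖v i‖ := by
        rw [norm_mul, Complex.norm_real, Real.norm_eq_abs, abs_of_pos hp]
      have hb : ‖∑ j ∈ Finset.univ.erase i, (∑ r, (starRingEnd ℂ) (Φ r i) * Φ r j) * v j‖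
          ≤ ∑ j ∈ Finset.univ.erase i, s * ‖v j‖ := by
        refine (norm_sum_le _ _).trans (Finset.sum_le_sum fun j hj => ?_)
        rw [norm_mul]
        exact mul_le_mul_of_nonneg_right
          (hoff i j (Ne.symm (Finset.mem_erase.1 hj).1)) (norm_nonneg _)
      have hsum : ∑ j ∈ Finset.univ.erase i, ‖v j‖ = L - ‖v i‖ := by
        rw [hL, ← Finset.add_sum_erase Finset.univ (fun j => ‖v j‖) (Finset.mem_univ i)]
        ring
      calc p * ‖v i‖ = ‖(p : ℂ) * v i‖ := hpn.symm
        _ = ‖∑ j ∈ Finset.univ.erase i, (∑ r, (starRingEnd ℂ) (Φ r i) * Φ r j) * v j‖ := by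
            rw [h1, norm_neg]
        _ ≤ ∑ j ∈ Finset.univ.erase i, s * ‖v j‖ := hb
        _ = s * (L - ‖v i‖) := by rw [← Finset.mul_sum, hsum]
    nlinarith [norm_nonneg (v i)]
  set S : Finset ι := Finset.univ.filter (fun i => x i ≠ 0) with hSdef
  have hSsum : (s + 1) * ∑ i ∈ S, ‖v i‖ ≤ t * L := by
    rw [Finset.mul_sum]
    calc ∑ i ∈ S, (s + 1) * ‖v i‖ ≤ ∑ i ∈ S, L := Finset.sum_le_sum fun i _ => key i
      _ = S.card * L := by rw [Finset.sum_const, nsmul_eq_mul]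
      _ ≤ t * L := by
          have : (S.card : ℝ) ≤ t := Nat.cast_le.2 hx
          nlinarith
  have hhalf : 2 * ∑ i ∈ S, ‖v i‖ < L := by
    have h4 : 0 ≤ ∑ i ∈ S, ‖v i‖ := Finset.sum_nonneg fun i _ => norm_nonneg _
    nlinarith
  have hxoff : ∀ i, i ∉ S → x i = 0 := by
    intro i hi
    by_contra hxi
    exact hi (Finset.mem_filter.2 ⟨Finset.mem_univ i, hxi⟩)
  have hsplit : ∀ i, i ∉ S → v i = z i := by
    intro i hi
    simp [hv, hxoff i hi]
  have hzS : ∀ i, ‖x i‖ - ‖v i‖ ≤ ‖z i‖ := by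
    intro i
    have hxi : x i = z i - v i := by simp [hv]
    have : ‖x i‖ ≤ ‖z i‖ + ‖v i‖ := by rw [hxi]; exact norm_sub_le _ _
    linarith
  have e1 : ∑ i, ‖z i‖ = ∑ i ∈ S, ‖z i‖ + ∑ i ∈ Sᶜ, ‖z i‖ :=
    (Finset.sum_add_sum_compl S _).symm
  have e2 : ∑ i, ‖x i‖ = ∑ i ∈ S, ‖x i‖ := by
    rw [← Finset.sum_add_sum_compl S fun i => ‖x i‖]
    have : ∑ i ∈ Sᶜ, ‖x i‖ = 0 :=
      Finset.sum_eq_zero fun i hi => by rw [hxoff i (Finset.mem_compl.1 hi)]; simp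
    rw [this, add_zero]
  have e3 : ∑ i ∈ Sᶜ, ‖z i‖ = L - ∑ i ∈ S, ‖v i‖ := by
    have : ∑ i ∈ Sᶜ, ‖z i‖ = ∑ i ∈ Sᶜ, ‖v i‖ :=
      Finset.sum_congr rfl fun i hi => by rw [← hsplit i (Finset.mem_compl.1 hi)]
    rw [this, hL, ← Finset.sum_add_sum_compl S fun i => ‖v i‖]
    ring
  have e4 : ∑ i ∈ S, ‖x i‖ - ∑ i ∈ S, ‖v i‖ ≤ ∑ i ∈ S, ‖z i‖ := by
    rw [← Finset.sum_sub_distrib]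
    exact Finset.sum_le_sum fun i _ => hzS i
  rw [e1, e2, e3]
  linarith

/-- For every rational `h > 3` there is a constant `C_h` such that for every
`n > C_h` there exists an `n × ⌊hn⌋` complex matrix with `(ℓ₁,t)`-recoverability for
every positive integer `t ≤ √n/4`. -/
theorem stmt_15 (h : ℚ) (hh : 3 < h) :
    ∃ C : ℕ, ∀ n : ℕ, C < n →
      ∃ Φ : Matrix (Fin n) (Fin ⌊h * (n : ℚ)⌋₊) ℂ,
        ∀ t : ℕ, 0 < t → (t : ℝ) ≤ Real.sqrt n / 4 → Recoverable Φ t := by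
  classical
  refine ⟨4 * ⌈h⌉₊ + 4, fun n hn => ?_⟩
  have hh4 : 4 ≤ ⌈h⌉₊ := by
    have : (3 : ℕ) < ⌈h⌉₊ := Nat.lt_ceil.2 (by exact_mod_cast hh)
    omega
  have hn20 : 20 < n := by omega
  obtain ⟨p, hp, hp1, hp2⟩ := Nat.exists_prime_lt_and_le_two_mul (n / 2) (by omega)
  haveI : Fact p.Prime := ⟨hp⟩
  haveI : NeZero p := ⟨hp.pos.ne'⟩
  have hpn : p ≤ n := by omega
  have hp2' : p ≠ 2 := by omega
  have hn2p : n < 2 * p := by omega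
  set N := ⌊h * (n : ℚ)⌋₊ with hN
  -- N ≤ p * p
  have hNpp : N ≤ p * p := by
    have h0 : (0 : ℚ) ≤ h * n := by positivity
    have h1 : (N : ℚ) ≤ h * n := Nat.floor_le h0
    have h2 : h ≤ (⌈h⌉₊ : ℚ) := Nat.le_ceil h
    have h3 : (4 * ⌈h⌉₊ : ℚ) ≤ (n : ℚ) := by exact_mod_cast (by omega : 4 * ⌈h⌉₊ ≤ n)
    have h4 : (n : ℚ) < 2 * p := by exact_mod_cast hn2p
    have h5 : (0 : ℚ) ≤ (n : ℚ) := by positivity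
    have : (N : ℚ) < (p : ℚ) * p := by nlinarith
    exact_mod_cast this.le
  obtain ⟨e⟩ : Nonempty (Fin N ↪ ZMod p × ZMod p) :=
    Function.Embedding.nonempty_of_card_le (by
      simpa [ZMod.card] using hNpp)
  set Φ : Matrix (Fin n) (Fin N) ℂ := fun r j =>
    if (r : ℕ) < p then
      ZMod.stdAddChar ((e j).1 * ((r : ℕ) : ZMod p) ^ 2 + (e j).2 * ((r : ℕ) : ZMod p))
    else 0 with hΦ
  refine ⟨Φ, fun t ht0 ht => ?_⟩
  -- Gram entries
  have gram : ∀ i j : Fin N, ∑ r, (starRingEnd ℂ) (Φ r i) * Φ r j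
      = ∑ x : ZMod p, (starRingEnd ℂ)
          (ZMod.stdAddChar ((e i).1 * x ^ 2 + (e i).2 * x))
          * ZMod.stdAddChar ((e j).1 * x ^ 2 + (e j).2 * x) := by
    intro i j
    rw [← sum_fin_eq_sum_zmod hpn (fun x => (starRingEnd ℂ)
      (ZMod.stdAddChar ((e i).1 * x ^ 2 + (e i).2 * x))
      * ZMod.stdAddChar ((e j).1 * x ^ 2 + (e j).2 * x))]
    refine Finset.sum_congr rfl fun r _ => ?_
    by_cases hr : (r : ℕ) < p <;> simp [hΦ, hr]
  have hdiag : ∀ j, ∑ r, (starRingEnd ℂ) (Φ r j) * Φ r j = (((p : ℝ)) : ℂ) := by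
    intro j
    rw [gram j j]
    calc ∑ x : ZMod p, (starRingEnd ℂ)
          (ZMod.stdAddChar ((e j).1 * x ^ 2 + (e j).2 * x))
          * ZMod.stdAddChar ((e j).1 * x ^ 2 + (e j).2 * x)
        = ∑ _x : ZMod p, (1 : ℂ) :=
          Finset.sum_congr rfl fun x _ => conj_mul_self_stdAddChar _
      _ = (((p : ℝ)) : ℂ) := by
          rw [Finset.sum_const, Finset.card_univ, ZMod.card]
          push_cast
          ring
  have hoff : ∀ i j, i ≠ j →
      ‖∑ r, (starRingEnd ℂ) (Φ r i) * Φ r j‖ ≤ Real.sqrt p := by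
    intro i j hij
    rw [gram i j]
    have hgram2 : ∑ x : ZMod p, (starRingEnd ℂ)
          (ZMod.stdAddChar ((e i).1 * x ^ 2 + (e i).2 * x))
          * ZMod.stdAddChar ((e j).1 * x ^ 2 + (e j).2 * x)
        = ∑ x : ZMod p, ZMod.stdAddChar
            (((e j).1 - (e i).1) * x ^ 2 + ((e j).2 - (e i).2) * x) := by
      refine Finset.sum_congr rfl fun x _ => ?_
      rw [conj_stdAddChar, ← AddChar.map_add_eq_mul]
      congr 1
      ring
    rw [hgram2]
    by_cases hc : (e j).1 - (e i).1 = 0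
    · have hd : (e j).2 - (e i).2 ≠ 0 := by
        intro hd0
        apply hij
        apply e.injective
        have h1 : (e j).1 = (e i).1 := by
          have := sub_eq_zero.1 hc; exact this
        have h2 : (e j).2 = (e i).2 := by
          have := sub_eq_zero.1 hd0; exact this
        exact (Prod.ext h1 h2).symm
      have : ∑ x : ZMod p, ZMod.stdAddChar
            (((e j).1 - (e i).1) * x ^ 2 + ((e j).2 - (e i).2) * x)
          = ∑ x : ZMod p, ZMod.stdAddChar (((e j).2 - (e i).2) * x) := by
        refine Finset.sum_congr rfl fun x _ => ?_
        rw [hc]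
        ring_nf
      rw [this, sum_stdAddChar_mul_eq_zero hd]
      simp [Real.sqrt_nonneg]
    · rw [norm_chirp_sum hp2' hc]
  -- the sparsity bound
  have hsq : (2 * t : ℝ) < Real.sqrt p := by
    rw [show ((2 * t : ℝ)) = ((2 * t : ℕ) : ℝ) by push_cast; ring]
    rw [← Real.sqrt_sq (by positivity : (0 : ℝ) ≤ ((2 * t : ℕ) : ℝ))] at *
    have hn0 : (0 : ℝ) ≤ (n : ℝ) := by positivity
    have hsn := Real.sq_sqrt hn0
    have htn : (t : ℝ) ^ 2 ≤ (n : ℝ) / 16 := by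
      nlinarith [Real.sqrt_nonneg (n : ℝ), Nat.cast_nonneg (α := ℝ) t]
    have hnp : (n : ℝ) < 2 * p := by exact_mod_cast hn2p
    refine Real.sqrt_lt_sqrt (by positivity) ?_
    push_cast
    nlinarith
  exact recoverable_of_gram Φ (p : ℝ) (by exact_mod_cast hp.pos) hdiag hoff t
    (by linarith)
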